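/- Every pair of vertices of I₁ is at graph distance at most 3, and some pair of vertices of I₁ is at graph distance exactly 3 (so I₁ has diameter 3), whereas I₂ contains a pair of vertices at graph distance exactly 4. Hence the shortest path kernel distinguishes I₁ and I₂. -/

import Mathlib

open SimpleGraph

/-- `I₁` : the simple graph on `Fin 8` with the edges
`{0,1},{0,2},{1,3},{2,4},{2,5},{3,4},{3,5},{4,6},{5,7},{6,7}`. -/
def I₁ : SimpleGraph (Fin 8) :=
  SimpleGraph.fromEdgeSet
    {s(0,1), s(0,2), s(1,3), s(2,4), s(2,5), s(3,4), s(3,5), s(4,6), s(5,7), s(6,7)}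

/-- `I₂` : the 2×4 ladder graph. -/
def I₂ : SimpleGraph (Fin 8) :=
  SimpleGraph.fromEdgeSet
    {s(0,1), s(0,2), s(1,3), s(2,3), s(2,4), s(3,5), s(4,5), s(4,6), s(5,7), s(6,7)}

instance : DecidableRel I₁.Adj := fun u v => by
  unfold I₁
  rw [SimpleGraph.fromEdgeSet_adj]
  simp only [Set.mem_insert_iff, Set.mem_singleton_iff]
  infer_instance

instance : DecidableRel I₂.Adj := fun u v => by
  unfold I₂
  rw [SimpleGraph.fromEdgeSet_adj]
  simp only [Set.mem_insert_iff, Set.mem_singleton_iff]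
  infer_instance

lemma walk3 {V : Type*} {G : SimpleGraph V} {u v : V} (p : G.Walk u v) (h : p.length ≤ 3) :
    u = v ∨ G.Adj u v ∨ (∃ a, G.Adj u a ∧ G.Adj a v) ∨
      ∃ a b, G.Adj u a ∧ G.Adj a b ∧ G.Adj b v := by
  match p with
  | .nil => exact Or.inl rfl
  | .cons h1 .nil => exact Or.inr (Or.inl h1)
  | .cons h1 (.cons h2 .nil) => exact Or.inr (Or.inr (Or.inl ⟨_, h1, h2⟩))
  | .cons h1 (.cons h2 (.cons h3 .nil)) =>
      exact Or.inr (Or.inr (Or.inr ⟨_, _, h1, h2, h3⟩))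
  | .cons _ (.cons _ (.cons _ (.cons _ _))) => simp [SimpleGraph.Walk.length_cons] at h; omega

lemma walk2 {V : Type*} {G : SimpleGraph V} {u v : V} (p : G.Walk u v) (h : p.length ≤ 2) :
    u = v ∨ G.Adj u v ∨ (∃ a, G.Adj u a ∧ G.Adj a v) := by
  match p with
  | .nil => exact Or.inl rfl
  | .cons h1 .nil => exact Or.inr (Or.inl h1)
  | .cons h1 (.cons h2 .nil) => exact Or.inr (Or.inr ⟨_, h1, h2⟩)
  | .cons _ (.cons _ (.cons _ _)) => simp [SimpleGraph.Walk.length_cons] at h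

lemma dist_le_of_three {V : Type*} {G : SimpleGraph V} {u v : V}
    (h : u = v ∨ G.Adj u v ∨ (∃ a, G.Adj u a ∧ G.Adj a v) ∨
      ∃ a b, G.Adj u a ∧ G.Adj a b ∧ G.Adj b v) : G.dist u v ≤ 3 := by
  rcases h with rfl | h | ⟨a, h1, h2⟩ | ⟨a, b, h1, h2, h3⟩
  · rw [SimpleGraph.dist_self]; omega
  · calc G.dist u v ≤ (SimpleGraph.Walk.cons h .nil).length := SimpleGraph.dist_le _
      _ ≤ 3 := by simp
  · calc G.dist u v ≤ (SimpleGraph.Walk.cons h1 (SimpleGraph.Walk.cons h2 .nil)).length :=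
        SimpleGraph.dist_le _
      _ ≤ 3 := by simp
  · calc G.dist u v ≤ (SimpleGraph.Walk.cons h1 (SimpleGraph.Walk.cons h2
        (SimpleGraph.Walk.cons h3 .nil))).length := SimpleGraph.dist_le _
      _ ≤ 3 := by simp

theorem stmt5 :
    (∀ u v : Fin 8, I₁.dist u v ≤ 3) ∧
    (∃ u v : Fin 8, I₁.dist u v = 3) ∧
    (∃ u v : Fin 8, I₂.dist u v = 4) := by
  refine ⟨?_, ⟨0, 6, ?_⟩, ⟨0, 7, ?_⟩⟩
  · intro u v
    apply dist_le_of_three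
    revert u v
    decide
  · -- I₁.dist 0 6 = 3
    have hadj1 : I₁.Adj 0 2 := by decide
    have hadj2 : I₁.Adj 2 4 := by decide
    have hadj3 : I₁.Adj 4 6 := by decide
    have hle : I₁.dist 0 6 ≤ 3 :=
      dist_le_of_three (Or.inr (Or.inr (Or.inr ⟨2, 4, hadj1, hadj2, hadj3⟩)))
    have hr : I₁.Reachable 0 6 :=
      ⟨SimpleGraph.Walk.cons hadj1 (SimpleGraph.Walk.cons hadj2
        (SimpleGraph.Walk.cons hadj3 .nil))⟩
    have hgt : ¬ I₁.dist 0 6 ≤ 2 := by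
      intro h
      obtain ⟨p, hp⟩ := hr.exists_walk_length_eq_dist
      have := walk2 p (by omega)
      revert this
      decide
    omega
  · -- I₂.dist 0 7 = 4
    have h1 : I₂.Adj 0 1 := by decide
    have h2 : I₂.Adj 1 3 := by decide
    have h3 : I₂.Adj 3 5 := by decide
    have h4 : I₂.Adj 5 7 := by decide
    let p : I₂.Walk 0 7 :=
      SimpleGraph.Walk.cons h1 (SimpleGraph.Walk.cons h2
        (SimpleGraph.Walk.cons h3 (SimpleGraph.Walk.cons h4 .nil)))
    have hle : I₂.dist 0 7 ≤ 4 :=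
      le_trans (SimpleGraph.dist_le p) (by simp [p, SimpleGraph.Walk.length_cons])
    have hr : I₂.Reachable 0 7 := ⟨p⟩
    have hgt : ¬ I₂.dist 0 7 ≤ 3 := by
      intro h
      obtain ⟨q, hq⟩ := hr.exists_walk_length_eq_dist
      have := walk3 q (by omega)
      revert this
      decide
    omega
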